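/- For every u⁰ ∈ E, every b ∈ E*, and every τ > 0 satisfying τ·λ_A ≤ 1 and τ·λ_B < 1, there exists a unique u ∈ E such that (u − u⁰, v)_H + τ⟨A u, v⟩ = τ⟨b, v⟩ for all v ∈ E. -/

import Mathlib

open scoped RealInnerProductSpace

set_option maxHeartbeats 1000000 in
/-- A continuous strongly monotone map on a finite-dimensional real inner
product space is surjective.  Elementary proof by induction on the dimension
(splitting off one direction and using the intermediate value theorem),
avoiding Brouwer's fixed point theorem. -/
theorem strongMono_surj : ∀ (n : ℕ) {E : Type*} [NormedAddCommGroup E]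
    [InnerProductSpace ℝ E] [FiniteDimensional ℝ E], Module.finrank ℝ E = n →
    ∀ (F : E → E), Continuous F → ∀ c : ℝ, 0 < c →
    (∀ u w : E, c * ‖u - w‖ ^ 2 ≤ ⟪F u - F w, u - w⟫) → Function.Surjective F := by
  intro n
  induction n with
  | zero =>
    intro E _ _ _ hrank F hF c hc hm y
    have : Subsingleton E := Module.finrank_zero_iff.mp hrank
    exact ⟨y, Subsingleton.elim _ _⟩
  | succ n IH =>
    intro E _ _ _ hrank F hF c hc hm y
    -- pick a unit vector e
    have hpos : 0 < Module.finrank ℝ E := by omega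
    have hnt : Nontrivial E := Module.finrank_pos_iff.mp hpos
    obtain ⟨x, hx⟩ := exists_ne (0 : E)
    set e : E := ‖x‖⁻¹ • x with he_def
    have he : ‖e‖ = 1 := by
      rw [he_def, norm_smul, norm_inv, norm_norm]
      field_simp [norm_eq_zero.not.mpr hx]
    have he0 : e ≠ 0 := by
      intro h; rw [h, norm_zero] at he; norm_num at he
    set K : Submodule ℝ E := (ℝ ∙ e)ᗮ with hK_def
    have hKrank : Module.finrank ℝ K = n := by
      have h1 : Module.finrank ℝ (ℝ ∙ e) = 1 := finrank_span_singleton he0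
      have h2 := Submodule.finrank_add_finrank_orthogonal (K := (ℝ ∙ e))
      rw [← hK_def] at h2
      omega
    set P := K.orthogonalProjectionOnto with hP_def
    -- inner product against elements of K sees only the projection
    have hproj : ∀ (w : E) (k : E), k ∈ K → ⟪w, k⟫ = ⟪(P w : E), k⟫ := by
      intro w k hk
      have h0 : ⟪w - (P w : E), k⟫ = 0 := by
        have := K.sub_starProjection_mem_orthogonal w
        exact (Submodule.mem_orthogonal' K _).mp this k hk
      have := inner_sub_left (𝕜 := ℝ) w (P w : E) k
      rw [h0] at this
      linarith [this]
    have heK : ∀ k : K, ⟪(k : E), e⟫ = 0 := by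
      intro k
      have hk := (Submodule.mem_orthogonal (ℝ ∙ e) (k : E)).mp k.2
      have := hk e (Submodule.mem_span_singleton_self e)
      rwa [real_inner_comm] at this
    -- the reduced problem on K, for each value s of the e-coordinate
    have hGmono : ∀ (s : ℝ) (a b : K),
        c * ‖a - b‖ ^ 2 ≤ ⟪P (F ((a : E) + s • e)) - P (F ((b : E) + s • e)), a - b⟫ := by
      intro s a b
      have hsub : ((a : E) + s • e) - ((b : E) + s • e) = (a : E) - (b : E) := by abel
      have h1 := hm ((a : E) + s • e) ((b : E) + s • e)
      rw [hsub] at h1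
      have habK : (a : E) - (b : E) ∈ K := K.sub_mem a.2 b.2
      have h2 : ⟪F ((a : E) + s • e) - F ((b : E) + s • e), (a : E) - (b : E)⟫
          = ⟪(P (F ((a : E) + s • e)) : E) - (P (F ((b : E) + s • e)) : E), (a : E) - (b : E)⟫ := by
        rw [inner_sub_left, inner_sub_left,
          hproj (F ((a : E) + s • e)) _ habK, hproj (F ((b : E) + s • e)) _ habK]
      have h3 : ⟪P (F ((a : E) + s • e)) - P (F ((b : E) + s • e)), a - b⟫
          = ⟪(P (F ((a : E) + s • e)) : E) - (P (F ((b : E) + s • e)) : E), (a : E) - (b : E)⟫ := by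
        rw [Submodule.coe_inner]; norm_cast
      have hnorm : ‖a - b‖ = ‖(a : E) - (b : E)‖ := by
        rw [Submodule.coe_norm]; norm_cast
      rw [h3, ← h2, hnorm]
      exact h1
    -- solve the reduced problem for each s
    have hex : ∀ s : ℝ, ∃ k : K, P (F ((k : E) + s • e)) = P y := by
      intro s
      have hGcont : Continuous (fun k : K => P (F ((k : E) + s • e))) :=
        P.continuous.comp (hF.comp (continuous_subtype_val.add continuous_const))
      exact IH hKrank _ hGcont c hc (hGmono s) (P y)
    choose k hk using hex
    -- continuity of s ↦ k s
    have hkey : ∀ s t : ℝ, ‖k s - k t‖ ≤ c⁻¹ * ‖P (F ((k t : E) + s • e)) - P (F ((k t : E) + t • e))‖ := by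
      intro s t
      have h1 := hGmono s (k s) (k t)
      rw [hk s] at h1
      have h2 : P y = P (F ((k t : E) + t • e)) := (hk t).symm
      rw [h2] at h1
      have h3 : ⟪P (F ((k t : E) + t • e)) - P (F ((k t : E) + s • e)), k s - k t⟫
          ≤ ‖P (F ((k t : E) + t • e)) - P (F ((k t : E) + s • e))‖ * ‖k s - k t‖ :=
        real_inner_le_norm _ _
      set M := ‖P (F ((k t : E) + t • e)) - P (F ((k t : E) + s • e))‖ with hM
      have hM' : M = ‖P (F ((k t : E) + s • e)) - P (F ((k t : E) + t • e))‖ := by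
        rw [hM, norm_sub_rev]
      rw [← hM']
      have hMnn : 0 ≤ M := norm_nonneg _
      set d := ‖k s - k t‖ with hd
      have hdnn : 0 ≤ d := norm_nonneg _
      rcases eq_or_lt_of_le hdnn with h | h
      · rw [← h]; positivity
      · have : c * d ^ 2 ≤ M * d := le_trans h1 h3
        have hcd : c * d ≤ M := by nlinarith
        calc d = c⁻¹ * (c * d) := by field_simp
          _ ≤ c⁻¹ * M := by
              apply mul_le_mul_of_nonneg_left hcd (by positivity)
    have hkc : Continuous fun s => k s := by
      rw [continuous_iff_continuousAt]
      intro t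
      have haff : Continuous fun s : ℝ => (k t : E) + s • e := by fun_prop
      have hg : Continuous fun s => P (F ((k t : E) + s • e)) :=
        P.continuous.comp (hF.comp haff)
      rw [ContinuousAt, tendsto_iff_dist_tendsto_zero]
      have hgt : Filter.Tendsto
          (fun s => c⁻¹ * ‖P (F ((k t : E) + s • e)) - P (F ((k t : E) + t • e))‖)
          (nhds t) (nhds 0) := by
        have h0 : Filter.Tendsto (fun s => ‖P (F ((k t : E) + s • e)) - P (F ((k t : E) + t • e))‖)
            (nhds t) (nhds 0) := by
          have := (hg.tendsto t).sub (tendsto_const_nhds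
            (x := P (F ((k t : E) + t • e))))
          simpa using this.norm
        simpa using h0.const_mul c⁻¹
      exact squeeze_zero (fun s => dist_nonneg)
        (fun s => by rw [dist_eq_norm]; exact hkey s t) hgt
    -- the scalar function φ
    set φ : ℝ → ℝ := fun s => ⟪F ((k s : E) + s • e), e⟫ with hφ_def
    have hφc : Continuous φ := by
      apply Continuous.inner _ continuous_const
      exact hF.comp ((continuous_subtype_val.comp hkc).add (continuous_id.smul continuous_const))
    -- strong monotonicity of φ
    have hφmono : ∀ s t : ℝ, t ≤ s → c * (s - t) ≤ φ s - φ t := by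
      intro s t hts
      rcases eq_or_lt_of_le hts with h | h
      · rw [h]; simp
      have h1 := hm ((k s : E) + s • e) ((k t : E) + t • e)
      set us := (k s : E) + s • e
      set ut := (k t : E) + t • e
      have hsub : us - ut = ((k s : E) - (k t : E)) + (s - t) • e := by
        simp only [us, ut, sub_smul]; abel
      have habK : (k s : E) - (k t : E) ∈ K := K.sub_mem (k s).2 (k t).2
      -- the K-component of F us - F ut pairs to zero
      have hzero : ⟪F us - F ut, (k s : E) - (k t : E)⟫ = 0 := by
        rw [inner_sub_left, hproj (F us) _ habK, hproj (F ut) _ habK]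
        have h2 : P (F us) = P (F ut) := by rw [hk s, hk t]
        rw [h2, sub_self]
      have hip : ⟪F us - F ut, us - ut⟫ = (s - t) * (φ s - φ t) := by
        have hφs : φ s = ⟪F us, e⟫ := rfl
        have hφt : φ t = ⟪F ut, e⟫ := rfl
        rw [hsub, inner_add_right, hzero, zero_add, real_inner_smul_right,
          inner_sub_left, hφs, hφt]
      -- Pythagoras lower bound
      have hpy : (s - t) ^ 2 ≤ ‖us - ut‖ ^ 2 := by
        rw [hsub, norm_add_sq_real]
        have hke : ⟪(k s : E) - (k t : E), (s - t) • e⟫ = 0 := by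
          rw [real_inner_smul_right, inner_sub_left, heK (k s), heK (k t)]
          ring
        rw [hke, norm_smul, he]
        have := sq_nonneg ‖(k s : E) - (k t : E)‖
        simp only [Real.norm_eq_abs, mul_one]
        nlinarith [sq_abs (s - t)]
      have h2 : c * (s - t) ^ 2 ≤ (s - t) * (φ s - φ t) := by
        calc c * (s - t) ^ 2 ≤ c * ‖us - ut‖ ^ 2 := by nlinarith
          _ ≤ ⟪F us - F ut, us - ut⟫ := h1
          _ = (s - t) * (φ s - φ t) := hip
      have hst : 0 < s - t := by linarith
      nlinarith
    -- solve φ s = ⟪y, e⟫ by the intermediate value theorem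
    set r := ⟪y, e⟫ with hr
    set a : ℝ := min 0 ((r - φ 0) / c) with ha_def
    set bb : ℝ := max 0 ((r - φ 0) / c) with hb_def
    have hab : a ≤ bb := le_trans (min_le_left _ _) (le_max_left _ _)
    have hφa : φ a ≤ r := by
      have h1 := hφmono 0 a (min_le_left _ _)
      have h2 : c * a ≤ r - φ 0 := by
        have : a ≤ (r - φ 0) / c := min_le_right _ _
        calc c * a ≤ c * ((r - φ 0) / c) := by nlinarith
          _ = r - φ 0 := by field_simp
      linarith
    have hφb : r ≤ φ bb := by
      have h1 := hφmono bb 0 (le_max_left _ _)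
      have h2 : r - φ 0 ≤ c * bb := by
        have : (r - φ 0) / c ≤ bb := le_max_right _ _
        calc r - φ 0 = c * ((r - φ 0) / c) := by field_simp
          _ ≤ c * bb := by nlinarith
      linarith
    obtain ⟨s, _, hs⟩ := intermediate_value_Icc hab hφc.continuousOn ⟨hφa, hφb⟩
    -- assemble the solution
    refine ⟨(k s : E) + s • e, ?_⟩
    set u := (k s : E) + s • e with hu_def
    have h1 : P (F u) = P y := hk s
    have h2 : ⟪F u, e⟫ = ⟪y, e⟫ := hs
    have hd : F u - y ∈ ℝ ∙ e := by
      have hdK : P (F u - y) = 0 := by rw [map_sub, h1, sub_self]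
      have := Submodule.orthogonalProjectionOnto_eq_zero_iff.mp hdK
      rwa [hK_def, Submodule.orthogonal_orthogonal] at this
    obtain ⟨α, hα⟩ := Submodule.mem_span_singleton.mp hd
    have hα0 : α = 0 := by
      have h3 : ⟪F u - y, e⟫ = 0 := by rw [inner_sub_left, h2, sub_self]
      rw [← hα, real_inner_smul_left, real_inner_self_eq_norm_sq, he] at h3
      simpa using h3
    have : F u - y = 0 := by rw [← hα, hα0, zero_smul]
    exact sub_eq_zero.mp this

/-- Lemma 3.2 (per sample path): unique solvability of one implicit Euler step
of the fully discrete scheme. `E` is a finite-dimensional inner product space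
(norm `‖·‖` is the `H`-norm), `nV` is a second norm on `E`, `A : E → E*` is
continuous, monotone (with constant `lB`) and coercive (with constants `μ, lam, lA`).
Then for every `u⁰`, every `b ∈ E*` and every time step `τ > 0` with
`τ·lA ≤ 1` and `τ·lB < 1` there is a unique `u` with
`(u − u⁰, v)_H + τ⟨Au, v⟩ = τ⟨b, v⟩` for all `v`. -/
theorem stmt1 {E : Type*} [NormedAddCommGroup E] [InnerProductSpace ℝ E]
    [FiniteDimensional ℝ E]
    (nV : E → ℝ)
    (hnV_eq : ∀ v : E, nV v = 0 ↔ v = 0)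
    (hnV_smul : ∀ (c : ℝ) (v : E), nV (c • v) = |c| * nV v)
    (hnV_add : ∀ v w : E, nV (v + w) ≤ nV v + nV w)
    (A : E → E →L[ℝ] ℝ) (hA : Continuous A)
    (p μ lam lA lB : ℝ) (hp : 1 < p) (hμ : 0 < μ) (hlam : 0 ≤ lam)
    (hlA : 0 ≤ lA) (hlB : 0 ≤ lB)
    (hmono : ∀ v w : E, 0 ≤ 2 * (A v (v - w) - A w (v - w)) + lB * ‖v - w‖ ^ 2)
    (hcoer : ∀ v : E, μ * nV v ^ p - lam ≤ A v v + lA * ‖v‖ ^ 2)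
    (u0 : E) (b : E →L[ℝ] ℝ) (τ : ℝ) (hτ : 0 < τ)
    (hτA : τ * lA ≤ 1) (hτB : τ * lB < 1) :
    ∃! u : E, ∀ v : E, (inner ℝ (u - u0) v : ℝ) + τ * A u v = τ * b v := by
  classical
  set J := InnerProductSpace.toDual ℝ E with hJ
  set F : E → E := fun u => u - u0 + τ • (J.symm (A u) - J.symm b) with hF_def
  have hFinner : ∀ u v : E, ⟪F u, v⟫ = ⟪u - u0, v⟫ + τ * (A u v - b v) := by
    intro u v
    rw [hF_def]
    simp only [inner_add_left, real_inner_smul_left, inner_sub_left]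
    rw [InnerProductSpace.toDual_symm_apply, InnerProductSpace.toDual_symm_apply]
  have hFcont : Continuous F := by
    apply (continuous_id.sub continuous_const).add
    exact ((J.symm.continuous.comp hA).sub continuous_const).const_smul τ
  set c : ℝ := 1 - τ * lB / 2 with hc_def
  have hc : 0 < c := by rw [hc_def]; linarith
  have hFm : ∀ u w : E, c * ‖u - w‖ ^ 2 ≤ ⟪F u - F w, u - w⟫ := by
    intro u w
    have h1 : F u - F w = (u - w) + τ • (J.symm (A u) - J.symm (A w)) := by
      rw [hF_def]
      simp only [smul_sub]
      abel
    have h2 : ⟪F u - F w, u - w⟫ = ‖u - w‖ ^ 2 + τ * (A u (u - w) - A w (u - w)) := by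
      rw [h1, inner_add_left, real_inner_self_eq_norm_sq, real_inner_smul_left,
        inner_sub_left, InnerProductSpace.toDual_symm_apply, InnerProductSpace.toDual_symm_apply]
    have h3 := hmono u w
    rw [h2, hc_def]
    nlinarith
  obtain ⟨u, hu⟩ := strongMono_surj (Module.finrank ℝ E) rfl F hFcont c hc hFm 0
  refine ⟨u, ?_, ?_⟩
  · intro v
    have : ⟪F u, v⟫ = 0 := by rw [hu]; exact inner_zero_left v
    rw [hFinner] at this
    linarith
  · intro u' hu'
    have hu0 : ∀ v : E, (inner ℝ (u - u0) v : ℝ) + τ * A u v = τ * b v := by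
      intro v
      have : ⟪F u, v⟫ = 0 := by rw [hu]; exact inner_zero_left v
      rw [hFinner] at this
      linarith
    set d := u' - u with hd_def
    have hkey : ⟪d, d⟫ + τ * (A u' d - A u d) = 0 := by
      have h1 := hu' d
      have h2 := hu0 d
      have h3 : (inner ℝ (u' - u0) d : ℝ) - (inner ℝ (u - u0) d : ℝ) = ⟪d, d⟫ := by
        rw [← inner_sub_left]
        congr 1
        rw [hd_def]; abel
      linarith
    have hm := hmono u' u
    rw [← hd_def] at hm
    have hdn : ⟪d, d⟫ = ‖d‖ ^ 2 := real_inner_self_eq_norm_sq d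
    have : ‖d‖ ^ 2 = 0 := by nlinarith
    have hd0 : d = 0 := by
      rwa [pow_eq_zero_iff (two_ne_zero), norm_eq_zero] at this
    rw [hd_def] at hd0
    exact sub_eq_zero.mp hd0
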